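/- A finite cube-free median graph with n vertices has at most 2n edges. -/

import Mathlib

open SimpleGraph Finset

/-- The graph interval `I(u,v)`: vertices on shortest `(u,v)`-paths. -/
def interval {V : Type*} (G : SimpleGraph V) (u v : V) : Set V :=
  {w | G.dist u w + G.dist w v = G.dist u v}

/-- A median graph: connected, and every triple of vertices has a unique median. -/
def IsMedianGraph {V : Type*} (G : SimpleGraph V) : Prop :=
  G.Connected ∧ ∀ x y z : V, ∃! m : V,
    m ∈ interval G x y ∧ m ∈ interval G y z ∧ m ∈ interval G x z

/-- A set of vertices is (graph) convex if it contains all intervals between its members. -/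
def GraphConvex {V : Type*} (G : SimpleGraph V) (S : Set V) : Prop :=
  ∀ u ∈ S, ∀ v ∈ S, interval G u v ⊆ S

/-- A halfspace: a convex set with convex complement. -/
def IsHalfspace {V : Type*} (G : SimpleGraph V) (H : Set V) : Prop :=
  GraphConvex G H ∧ GraphConvex G Hᶜ

/-- The hypercube graph `Q_k`: vertices are `{0,1}^k`, adjacent iff they differ in exactly
one coordinate. -/
def cubeGraph (k : ℕ) : SimpleGraph (Fin k → Fin 2) :=
  SimpleGraph.fromRel (fun a b => ∃! i, a i ≠ b i)

/-- A graph is cube-free if it has no induced subgraph isomorphic to `Q_3`. -/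
def CubeFree {V : Type*} (G : SimpleGraph V) : Prop :=
  ¬ Nonempty (cubeGraph 3 ↪g G)

/-- A 4-cycle of the subgraph of `G` induced by `S`: a 4-element vertex subset of `S`
inducing a cycle of length 4. -/
def IsFourCycleIn {V : Type*} (G : SimpleGraph V) (S : Set V) (t : Finset V) : Prop :=
  (↑t : Set V) ⊆ S ∧ t.card = 4 ∧ Nonempty (G.induce (↑t : Set V) ≃g SimpleGraph.cycleGraph 4)

/-! ### Auxiliary lemmas -/

lemma feta (f : Fin 3 → Fin 2) : f = ![f 0, f 1, f 2] := by
  funext i; fin_cases i <;> rfl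

lemma cube_adj_vals (f g : Fin 3 → Fin 2) :
    (cubeGraph 3).Adj f g ↔
      ((f 0 ≠ g 0 ∧ f 1 = g 1 ∧ f 2 = g 2) ∨ (f 0 = g 0 ∧ f 1 ≠ g 1 ∧ f 2 = g 2) ∨
        (f 0 = g 0 ∧ f 1 = g 1 ∧ f 2 ≠ g 2)) := by
  have key : ∀ a b c d e k : Fin 2,
      ((![a,b,c] : Fin 3 → Fin 2) ≠ ![d,e,k] ∧
        ((∃ i, ((![a,b,c] : Fin 3 → Fin 2) i ≠ ![d,e,k] i ∧
            ∀ j, (![a,b,c] : Fin 3 → Fin 2) j ≠ ![d,e,k] j → j = i)) ∨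
          (∃ i, ((![d,e,k] : Fin 3 → Fin 2) i ≠ ![a,b,c] i ∧
            ∀ j, (![d,e,k] : Fin 3 → Fin 2) j ≠ ![a,b,c] j → j = i)))) ↔
      ((a ≠ d ∧ b = e ∧ c = k) ∨ (a = d ∧ b ≠ e ∧ c = k) ∨ (a = d ∧ b = e ∧ c ≠ k)) := by
    decide
  simp only [cubeGraph, fromRel_adj, ExistsUnique]
  conv_lhs => rw [feta f, feta g]
  exact key (f 0) (f 1) (f 2) (g 0) (g 1) (g 2)

def cubeMap {V : Type*} (x0 x1 x2 x3 x4 x5 x6 x7 : V) (f : Fin 3 → Fin 2) : V :=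
  ![![![x0, x1], ![x2, x3]], ![![x4, x5], ![x6, x7]]] (f 0) (f 1) (f 2)

set_option maxHeartbeats 2000000 in
lemma cube_embed {V : Type*} {G : SimpleGraph V} (x0 x1 x2 x3 x4 x5 x6 x7 : V)
    (a01 : G.Adj x0 x1) (a02 : G.Adj x0 x2) (a04 : G.Adj x0 x4)
    (a13 : G.Adj x1 x3) (a15 : G.Adj x1 x5)
    (a23 : G.Adj x2 x3) (a26 : G.Adj x2 x6)
    (a45 : G.Adj x4 x5) (a46 : G.Adj x4 x6)
    (a37 : G.Adj x3 x7) (a57 : G.Adj x5 x7) (a67 : G.Adj x6 x7)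
    (n03 : ¬G.Adj x0 x3) (n05 : ¬G.Adj x0 x5) (n06 : ¬G.Adj x0 x6) (n07 : ¬G.Adj x0 x7)
    (n12 : ¬G.Adj x1 x2) (n14 : ¬G.Adj x1 x4) (n24 : ¬G.Adj x2 x4)
    (n16 : ¬G.Adj x1 x6) (n17 : ¬G.Adj x1 x7) (n25 : ¬G.Adj x2 x5) (n27 : ¬G.Adj x2 x7)
    (n34 : ¬G.Adj x3 x4) (n47 : ¬G.Adj x4 x7) (n35 : ¬G.Adj x3 x5) (n36 : ¬G.Adj x3 x6)
    (n56 : ¬G.Adj x5 x6)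
    (q03 : x0 ≠ x3) (q05 : x0 ≠ x5) (q06 : x0 ≠ x6) (q07 : x0 ≠ x7)
    (q12 : x1 ≠ x2) (q14 : x1 ≠ x4) (q24 : x2 ≠ x4)
    (q16 : x1 ≠ x6) (q17 : x1 ≠ x7) (q25 : x2 ≠ x5) (q27 : x2 ≠ x7)
    (q34 : x3 ≠ x4) (q47 : x4 ≠ x7) (q35 : x3 ≠ x5) (q36 : x3 ≠ x6) (q56 : x5 ≠ x6) :
    Nonempty (cubeGraph 3 ↪g G) := by
  have two : ∀ t : Fin 2, t = 0 ∨ t = 1 := by decide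
  have s01 := a01.symm; have s02 := a02.symm; have s04 := a04.symm
  have s13 := a13.symm; have s15 := a15.symm; have s23 := a23.symm
  have s26 := a26.symm; have s45 := a45.symm; have s46 := a46.symm
  have s37 := a37.symm; have s57 := a57.symm; have s67 := a67.symm
  have m03 : ¬G.Adj x3 x0 := fun h => n03 h.symm
  have m05 : ¬G.Adj x5 x0 := fun h => n05 h.symm
  have m06 : ¬G.Adj x6 x0 := fun h => n06 h.symm
  have m07 : ¬G.Adj x7 x0 := fun h => n07 h.symm
  have m12 : ¬G.Adj x2 x1 := fun h => n12 h.symm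
  have m14 : ¬G.Adj x4 x1 := fun h => n14 h.symm
  have m24 : ¬G.Adj x4 x2 := fun h => n24 h.symm
  have m16 : ¬G.Adj x6 x1 := fun h => n16 h.symm
  have m17 : ¬G.Adj x7 x1 := fun h => n17 h.symm
  have m25 : ¬G.Adj x5 x2 := fun h => n25 h.symm
  have m27 : ¬G.Adj x7 x2 := fun h => n27 h.symm
  have m34 : ¬G.Adj x4 x3 := fun h => n34 h.symm
  have m47 : ¬G.Adj x7 x4 := fun h => n47 h.symm
  have m35 : ¬G.Adj x5 x3 := fun h => n35 h.symm
  have m36 : ¬G.Adj x6 x3 := fun h => n36 h.symm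
  have m56 : ¬G.Adj x6 x5 := fun h => n56 h.symm
  have p01 := a01.ne; have p02 := a02.ne; have p04 := a04.ne
  have p13 := a13.ne; have p15 := a15.ne; have p23 := a23.ne
  have p26 := a26.ne; have p45 := a45.ne; have p46 := a46.ne
  have p37 := a37.ne; have p57 := a57.ne; have p67 := a67.ne
  have r01 := a01.ne'; have r02 := a02.ne'; have r04 := a04.ne'
  have r13 := a13.ne'; have r15 := a15.ne'; have r23 := a23.ne'
  have r26 := a26.ne'; have r45 := a45.ne'; have r46 := a46.ne'
  have r37 := a37.ne'; have r57 := a57.ne'; have r67 := a67.ne'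
  have w03 := q03.symm; have w05 := q05.symm; have w06 := q06.symm; have w07 := q07.symm
  have w12 := q12.symm; have w14 := q14.symm; have w24 := q24.symm
  have w16 := q16.symm; have w17 := q17.symm; have w25 := q25.symm; have w27 := q27.symm
  have w34 := q34.symm; have w47 := q47.symm; have w35 := q35.symm; have w36 := q36.symm
  have w56 := q56.symm
  refine ⟨⟨⟨cubeMap x0 x1 x2 x3 x4 x5 x6 x7, ?_⟩, ?_⟩⟩
  · intro f g hfg
    rcases two (f 0) with h0|h0 <;> rcases two (f 1) with h1|h1 <;>
      rcases two (f 2) with h2|h2 <;> rcases two (g 0) with k0|k0 <;>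
      rcases two (g 1) with k1|k1 <;> rcases two (g 2) with k2|k2 <;>
      simp only [cubeMap, h0, h1, h2, k0, k1, k2, Matrix.cons_val_zero, Matrix.cons_val_one,
        Matrix.head_cons] at hfg <;>
      first
        | (exact absurd hfg (by assumption))
        | (rw [feta f, feta g, h0, h1, h2, k0, k1, k2])
  · intro f g
    show G.Adj (cubeMap x0 x1 x2 x3 x4 x5 x6 x7 f) (cubeMap x0 x1 x2 x3 x4 x5 x6 x7 g) ↔ _
    rw [cube_adj_vals]
    rcases two (f 0) with h0|h0 <;> rcases two (f 1) with h1|h1 <;>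
      rcases two (f 2) with h2|h2 <;> rcases two (g 0) with k0|k0 <;>
      rcases two (g 1) with k1|k1 <;> rcases two (g 2) with k2|k2 <;>
      simp only [cubeMap, Function.Embedding.coeFn_mk, h0, h1, h2, k0, k1, k2,
        Matrix.cons_val_zero, Matrix.cons_val_one, Matrix.head_cons] <;>
      first
        | (refine iff_of_false ?_ (by decide); first | assumption | exact G.irrefl)
        | (refine iff_of_true ?_ (by decide); assumption)

section MedianLemmas
variable {V : Type*} {G : SimpleGraph V}
  (hconn : G.Connected)
  (hmed : ∀ x y z : V, ∃! m : V,
    m ∈ interval G x y ∧ m ∈ interval G y z ∧ m ∈ interval G x z)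

include hconn hmed

lemma no_triangle {x y z : V} (h1 : G.Adj x y) (h2 : G.Adj y z) (h3 : G.Adj x z) :
    False := by
  obtain ⟨m, ⟨ha, hb, hc⟩, -⟩ := hmed x y z
  simp only [interval, Set.mem_setOf_eq] at ha hb hc
  have dxy : G.dist x y = 1 := dist_eq_one_iff_adj.mpr h1
  have dyz : G.dist y z = 1 := dist_eq_one_iff_adj.mpr h2
  have dxz : G.dist x z = 1 := dist_eq_one_iff_adj.mpr h3
  have hm : G.dist x m = 0 ∨ G.dist m y = 0 := by omega
  rcases hm with hm | hm
  · have : m = x := ((hconn.dist_eq_zero_iff).mp hm).symm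
    subst this
    have d1 : G.dist y m = 1 := dist_eq_one_iff_adj.mpr h1.symm
    omega
  · have : m = y := (hconn.dist_eq_zero_iff).mp hm
    subst this
    omega

lemma adj_level (v0 : V) {x y : V} (h : G.Adj x y) :
    G.dist v0 x + 1 = G.dist v0 y ∨ G.dist v0 y + 1 = G.dist v0 x := by
  obtain ⟨m, ⟨ha, hb, hc⟩, -⟩ := hmed x y v0
  simp only [interval, Set.mem_setOf_eq] at ha hb hc
  have dxy : G.dist x y = 1 := dist_eq_one_iff_adj.mpr h
  have hm : G.dist x m = 0 ∨ G.dist m y = 0 := by omega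
  have c1 : G.dist v0 x = G.dist x v0 := dist_comm ..
  have c2 : G.dist v0 y = G.dist y v0 := dist_comm ..
  rcases hm with hm | hm
  · have : m = x := ((hconn.dist_eq_zero_iff).mp hm).symm
    subst this
    have d1 : G.dist y m = 1 := dist_eq_one_iff_adj.mpr h.symm
    left; omega
  · have : m = y := (hconn.dist_eq_zero_iff).mp hm
    subst this
    right; omega

lemma down_square (v0 a b : V) (hL : G.dist v0 a = G.dist v0 b)
    (h2 : G.dist a b = 2) :
    ∃ m, G.Adj a m ∧ G.Adj b m ∧ G.dist v0 m + 1 = G.dist v0 a := by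
  obtain ⟨m, ⟨ha, hb, hc⟩, -⟩ := hmed a v0 b
  simp only [interval, Set.mem_setOf_eq] at ha hb hc
  have c1 : G.dist v0 a = G.dist a v0 := dist_comm ..
  have c2 : G.dist m v0 = G.dist v0 m := dist_comm ..
  have d1 : G.dist a m = 1 := by omega
  have d2 : G.dist m b = 1 := by omega
  exact ⟨m, dist_eq_one_iff_adj.mp d1,
    (dist_eq_one_iff_adj.mp d2).symm, by omega⟩

lemma down_le_two (hcf : ¬ Nonempty (cubeGraph 3 ↪g G)) (v0 u a b c : V)
    (hab : a ≠ b) (hac : a ≠ c) (hbc : b ≠ c)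
    (hua : G.Adj u a) (hub : G.Adj u b) (huc : G.Adj u c)
    (hLa : G.dist v0 a + 1 = G.dist v0 u)
    (hLb : G.dist v0 b + 1 = G.dist v0 u)
    (hLc : G.dist v0 c + 1 = G.dist v0 u) : False := by
  -- basic distances
  have dua : G.dist u a = 1 := dist_eq_one_iff_adj.mpr hua
  have dub : G.dist u b = 1 := dist_eq_one_iff_adj.mpr hub
  have duc : G.dist u c = 1 := dist_eq_one_iff_adj.mpr huc
  have dau : G.dist a u = 1 := by rw [dist_comm]; exact dua
  have dbu : G.dist b u = 1 := by rw [dist_comm]; exact dub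
  have dcu : G.dist c u = 1 := by rw [dist_comm]; exact duc
  -- helper for dist = 2
  have dist2 : ∀ {x y : V}, x ≠ y → ¬G.Adj x y → G.dist x y ≤ 2 → G.dist x y = 2 := by
    intro x y h1 h2 h3
    have e0 : G.dist x y ≠ 0 := fun h => h1 (hconn.dist_eq_zero_iff.mp h)
    have e1 : G.dist x y ≠ 1 := fun h => h2 (dist_eq_one_iff_adj.mp h)
    omega
  -- a, b, c pairwise at distance 2
  have nadj_ab : ¬ G.Adj a b := fun h => by
    rcases adj_level hconn hmed v0 h with h' | h' <;> omega
  have nadj_ac : ¬ G.Adj a c := fun h => by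
    rcases adj_level hconn hmed v0 h with h' | h' <;> omega
  have nadj_bc : ¬ G.Adj b c := fun h => by
    rcases adj_level hconn hmed v0 h with h' | h' <;> omega
  have dab : G.dist a b = 2 := dist2 hab nadj_ab
    (le_trans (hconn.dist_triangle (v := u)) (by omega))
  have dac : G.dist a c = 2 := dist2 hac nadj_ac
    (le_trans (hconn.dist_triangle (v := u)) (by omega))
  have dbc : G.dist b c = 2 := dist2 hbc nadj_bc
    (le_trans (hconn.dist_triangle (v := u)) (by omega))
  -- unique common neighbor of a, b, c
  have ucom : ∀ v : V, G.Adj a v → G.Adj b v → G.Adj c v → v = u := by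
    intro v h1 h2 h3
    have dav : G.dist a v = 1 := dist_eq_one_iff_adj.mpr h1
    have dbv : G.dist b v = 1 := dist_eq_one_iff_adj.mpr h2
    have dcv : G.dist c v = 1 := dist_eq_one_iff_adj.mpr h3
    have dva : G.dist v a = 1 := by rw [dist_comm]; exact dav
    have dvb : G.dist v b = 1 := by rw [dist_comm]; exact dbv
    have dvc : G.dist v c = 1 := by rw [dist_comm]; exact dcv
    obtain ⟨m, -, hq⟩ := hmed a b c
    have e1 : v = m := by
      refine hq v ⟨?_, ?_, ?_⟩ <;> simp only [interval, Set.mem_setOf_eq] <;> omega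
    have e2 : u = m := by
      refine hq u ⟨?_, ?_, ?_⟩ <;> simp only [interval, Set.mem_setOf_eq] <;> omega
    rw [e1, e2]
  -- the three squares below u
  obtain ⟨mab, h_a_ab, h_b_ab, hL_ab⟩ := down_square hconn hmed v0 a b (by omega) dab
  obtain ⟨mac, h_a_ac, h_c_ac, hL_ac⟩ := down_square hconn hmed v0 a c (by omega) dac
  obtain ⟨mbc, h_b_bc, h_c_bc, hL_bc⟩ := down_square hconn hmed v0 b c (by omega) dbc
  -- distances to the new vertices
  have d_a_ab : G.dist a mab = 1 := dist_eq_one_iff_adj.mpr h_a_ab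
  have d_b_ab : G.dist b mab = 1 := dist_eq_one_iff_adj.mpr h_b_ab
  have d_a_ac : G.dist a mac = 1 := dist_eq_one_iff_adj.mpr h_a_ac
  have d_c_ac : G.dist c mac = 1 := dist_eq_one_iff_adj.mpr h_c_ac
  have d_b_bc : G.dist b mbc = 1 := dist_eq_one_iff_adj.mpr h_b_bc
  have d_c_bc : G.dist c mbc = 1 := dist_eq_one_iff_adj.mpr h_c_bc
  have d_ab_a : G.dist mab a = 1 := by rw [dist_comm]; exact d_a_ab
  have d_ab_b : G.dist mab b = 1 := by rw [dist_comm]; exact d_b_ab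
  have d_ac_a : G.dist mac a = 1 := by rw [dist_comm]; exact d_a_ac
  have d_ac_c : G.dist mac c = 1 := by rw [dist_comm]; exact d_c_ac
  have d_bc_b : G.dist mbc b = 1 := by rw [dist_comm]; exact d_b_bc
  have d_bc_c : G.dist mbc c = 1 := by rw [dist_comm]; exact d_c_bc
  -- mab etc. are not adjacent to the "third" vertex, and not equal to u
  have hLu : 2 ≤ G.dist v0 u := by
    by_contra h
    have h1 : G.dist v0 a = 0 := by omega
    have h2 : G.dist v0 b = 0 := by omega
    exact hab ((hconn.dist_eq_zero_iff.mp h1).symm.trans (hconn.dist_eq_zero_iff.mp h2))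
  have ne_ab_u : mab ≠ u := fun h => by rw [h] at hL_ab; omega
  have ne_ac_u : mac ≠ u := fun h => by rw [h] at hL_ac; omega
  have ne_bc_u : mbc ≠ u := fun h => by rw [h] at hL_bc; omega
  have nadj_c_ab : ¬ G.Adj c mab := fun h => ne_ab_u (ucom mab h_a_ab h_b_ab h)
  have nadj_b_ac : ¬ G.Adj b mac := fun h => ne_ac_u (ucom mac h_a_ac h h_c_ac)
  have nadj_a_bc : ¬ G.Adj a mbc := fun h => ne_bc_u (ucom mbc h h_b_bc h_c_bc)
  -- the m's are pairwise distinct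
  have ne_ab_ac : mab ≠ mac := fun h => nadj_c_ab (h ▸ h_c_ac)
  have ne_ab_bc : mab ≠ mbc := fun h => nadj_c_ab (h ▸ h_c_bc)
  have ne_ac_bc : mac ≠ mbc := fun h => nadj_b_ac (h ▸ h_b_bc)
  -- pairwise non-adjacent (same level)
  have nadj_ab_ac : ¬ G.Adj mab mac := fun h => by
    rcases adj_level hconn hmed v0 h with h' | h' <;> omega
  have nadj_ab_bc : ¬ G.Adj mab mbc := fun h => by
    rcases adj_level hconn hmed v0 h with h' | h' <;> omega
  have nadj_ac_bc : ¬ G.Adj mac mbc := fun h => by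
    rcases adj_level hconn hmed v0 h with h' | h' <;> omega
  -- pairwise at distance 2
  have d_ab_ac : G.dist mab mac = 2 := dist2 ne_ab_ac nadj_ab_ac
    (le_trans (hconn.dist_triangle (v := a)) (by omega))
  have d_ab_bc : G.dist mab mbc = 2 := dist2 ne_ab_bc nadj_ab_bc
    (le_trans (hconn.dist_triangle (v := b)) (by omega))
  have d_ac_bc : G.dist mac mbc = 2 := dist2 ne_ac_bc nadj_ac_bc
    (le_trans (hconn.dist_triangle (v := c)) (by omega))
  -- the bottom vertex
  obtain ⟨m, ⟨hm1, hm2, hm3⟩, -⟩ := hmed mab mac mbc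
  simp only [interval, Set.mem_setOf_eq] at hm1 hm2 hm3
  have c1 : G.dist mac m = G.dist m mac := dist_comm ..
  have d_ab_m : G.dist mab m = 1 := by omega
  have d_m_ac : G.dist m mac = 1 := by omega
  have d_m_bc : G.dist m mbc = 1 := by omega
  have adj_ab_m : G.Adj mab m := dist_eq_one_iff_adj.mp d_ab_m
  have adj_m_ac : G.Adj m mac := dist_eq_one_iff_adj.mp d_m_ac
  have adj_m_bc : G.Adj m mbc := dist_eq_one_iff_adj.mp d_m_bc
  -- m is not adjacent to u (and distinct from it)
  have nadj_u_ab : ¬ G.Adj u mab := fun h => by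
    rcases adj_level hconn hmed v0 h with h' | h' <;> omega
  have nadj_u_ac : ¬ G.Adj u mac := fun h => by
    rcases adj_level hconn hmed v0 h with h' | h' <;> omega
  have nadj_u_bc : ¬ G.Adj u mbc := fun h => by
    rcases adj_level hconn hmed v0 h with h' | h' <;> omega
  have ne_u_ab : u ≠ mab := ne_ab_u.symm
  have d_ab_u : G.dist mab u = 2 := dist2 ne_ab_u
    (fun h => nadj_u_ab h.symm) (le_trans (hconn.dist_triangle (v := a)) (by omega))
  have d_ac_u : G.dist mac u = 2 := dist2 ne_ac_u
    (fun h => nadj_u_ac h.symm) (le_trans (hconn.dist_triangle (v := a)) (by omega))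
  have ne_m_u : m ≠ u := fun h => nadj_u_ab (by rw [← h]; exact adj_ab_m.symm)
  have nadj_m_u : ¬ G.Adj m u := by
    intro h
    have dmu : G.dist m u = 1 := dist_eq_one_iff_adj.mpr h
    obtain ⟨m', -, hq⟩ := hmed mab mac u
    have e1 : a = m' := by
      refine hq a ⟨?_, ?_, ?_⟩ <;> simp only [interval, Set.mem_setOf_eq] <;> omega
    have e2 : m = m' := by
      refine hq m ⟨?_, ?_, ?_⟩ <;> simp only [interval, Set.mem_setOf_eq] <;> omega
    have ham : a = m := e1.trans e2.symm
    have : G.Adj a mbc := by rw [ham]; exact adj_m_bc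
    exact nadj_a_bc this
  -- m is not adjacent to a, b, c (triangles), and distinct from them
  have nadj_m_a : ¬ G.Adj m a := fun h =>
    no_triangle hconn hmed h.symm adj_ab_m.symm h_a_ab
  have nadj_m_b : ¬ G.Adj m b := fun h =>
    no_triangle hconn hmed h.symm adj_ab_m.symm h_b_ab
  have nadj_m_c : ¬ G.Adj m c := fun h =>
    no_triangle hconn hmed h.symm adj_m_ac h_c_ac
  have ne_m_a : m ≠ a := fun h => nadj_a_bc (by rw [← h]; exact adj_m_bc)
  have ne_m_b : m ≠ b := fun h => nadj_b_ac (by rw [← h]; exact adj_m_ac)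
  have ne_m_c : m ≠ c := fun h => nadj_c_ab (by rw [← h]; exact adj_ab_m.symm)
  -- levels give more distinctness
  have ne_a_ab : a ≠ mab := fun h => by rw [← h] at hL_ab; omega
  have ne_b_ac : b ≠ mac := fun h => by rw [← h] at hL_ac; omega
  have ne_c_ab : c ≠ mab := fun h => by rw [← h] at hL_ab; omega
  have ne_a_bc : a ≠ mbc := fun h => by rw [← h] at hL_bc; omega
  have ne_u_a : u ≠ a := hua.ne
  -- assemble the cube: x0=m x1=mab x2=mac x3=a x4=mbc x5=b x6=c x7=u
  exact hcf (cube_embed m mab mac a mbc b c u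
    adj_ab_m.symm adj_m_ac adj_m_bc
    h_a_ab.symm h_b_ab.symm
    h_a_ac.symm h_c_ac.symm
    h_b_bc.symm h_c_bc.symm
    hua.symm hub.symm huc.symm
    nadj_m_a nadj_m_b nadj_m_c nadj_m_u
    nadj_ab_ac nadj_ab_bc nadj_ac_bc
    (fun h => nadj_c_ab h.symm) (fun h => nadj_u_ab h.symm)
    (fun h => nadj_b_ac h.symm) (fun h => nadj_u_ac h.symm)
    nadj_a_bc (fun h => nadj_u_bc h.symm)
    nadj_ab nadj_ac nadj_bc
    ne_m_a ne_m_b ne_m_c ne_m_u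
    ne_ab_ac ne_ab_bc ne_ac_bc
    ne_c_ab.symm ne_ab_u ne_b_ac.symm ne_ac_u
    ne_a_bc ne_bc_u hab hac hbc)

end MedianLemmas

/-- A finite cube-free median graph with `n` vertices has at most `2n` edges. -/
theorem edges_le_two_mul_card {V : Type*} [Fintype V] (G : SimpleGraph V)
    (hG : IsMedianGraph G) (hcf : CubeFree G) :
    G.edgeSet.ncard ≤ 2 * Fintype.card V := by
  classical
  obtain ⟨hconn, hmed⟩ := hG
  obtain ⟨v0⟩ := hconn.nonempty
  have key : ∀ u : V, (univ.filter fun w => G.Adj u w ∧ G.dist v0 w < G.dist v0 u).card ≤ 2 := by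
    intro u
    by_contra hk
    push_neg at hk
    obtain ⟨a, b, c, ha, hb, hc, hab, hac, hbc⟩ := Finset.two_lt_card_iff.mp hk
    simp only [Finset.mem_filter, Finset.mem_univ, true_and] at ha hb hc
    have hLa : G.dist v0 a + 1 = G.dist v0 u := by
      rcases adj_level hconn hmed v0 ha.1 with h | h <;> omega
    have hLb : G.dist v0 b + 1 = G.dist v0 u := by
      rcases adj_level hconn hmed v0 hb.1 with h | h <;> omega
    have hLc : G.dist v0 c + 1 = G.dist v0 u := by
      rcases adj_level hconn hmed v0 hc.1 with h | h <;> omega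
    exact down_le_two hconn hmed hcf v0 u a b c hab hac hbc ha.1 hb.1 hc.1 hLa hLb hLc
  set D : Finset G.Dart := univ.filter fun d => G.dist v0 d.toProd.2 < G.dist v0 d.toProd.1
    with hD
  have step1 : G.edgeSet.ncard = G.edgeSet.toFinset.card := Set.ncard_eq_toFinset_card' _
  have step2 : G.edgeSet.toFinset.card ≤ D.card := by
    apply Finset.card_le_card_of_surjOn (fun d => d.edge)
    intro e he
    rw [Finset.mem_coe, Set.mem_toFinset] at he
    revert he
    refine Sym2.ind (fun x y => ?_) e
    intro he
    rw [mem_edgeSet] at he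
    rcases adj_level hconn hmed v0 he with h | h
    · refine ⟨⟨(y, x), he.symm⟩, ?_, Sym2.eq_swap⟩
      rw [Finset.mem_coe, hD, Finset.mem_filter]
      exact ⟨Finset.mem_univ _, by simpa using by omega⟩
    · refine ⟨⟨(x, y), he⟩, ?_, rfl⟩
      rw [Finset.mem_coe, hD, Finset.mem_filter]
      exact ⟨Finset.mem_univ _, by simpa using by omega⟩
  have step3 : D.card ≤ 2 * Fintype.card V := by
    rw [Finset.card_eq_sum_card_fiberwise
      (f := fun d : G.Dart => d.toProd.1) (t := univ) (fun d _ => Finset.mem_univ _)]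
    have hfib : ∀ u : V, (D.filter fun d => d.toProd.1 = u).card ≤ 2 := by
      intro u
      refine le_trans (Finset.card_le_card_of_injOn (fun d => d.toProd.2) ?_ ?_) (key u)
      · intro d hd
        simp only [hD, Finset.mem_coe, Finset.mem_filter, Finset.mem_univ, true_and] at hd
        obtain ⟨h1, h2⟩ := hd
        have hadj := d.adj
        rw [h2] at h1 hadj
        simp only [Finset.mem_coe, Finset.mem_filter, Finset.mem_univ, true_and]
        exact ⟨hadj, h1⟩
      · intro d1 h1 d2 h2 hsnd
        rw [Finset.mem_coe, Finset.mem_filter] at h1 h2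
        refine SimpleGraph.Dart.ext _ _ (Prod.ext_iff.mpr ⟨h1.2.trans h2.2.symm, hsnd⟩)
    calc ∑ u ∈ (univ : Finset V), (D.filter fun d => d.toProd.1 = u).card
        ≤ ∑ _u ∈ (univ : Finset V), 2 := Finset.sum_le_sum fun u _ => hfib u
      _ = 2 * Fintype.card V := by
          simp [Finset.sum_const, Finset.card_univ, mul_comm]
  omega
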